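/- Setting a = b = c = ω a primitive 8th root of unity in the squish-map connection matrices α, β, γ, the product γ⁻¹·β⁻¹·α⁻¹·γ·β·α around a single hexagon equals -I, where I is the 2×2 identity matrix. -/

import Mathlib

open Matrix Complex

theorem squish_eighth_root_hexagon (ω : ℂ) (h8 : ω ^ 8 = 1) (h4 : ω ^ 4 = -1) :
    let α : Matrix (Fin 2) (Fin 2) ℂ := !![I * ω, 0; 0, (I * ω)⁻¹]
    let β : Matrix (Fin 2) (Fin 2) ℂ := !![I * ω, -(I * ω) - I * ω⁻¹; 0, (I * ω)⁻¹]
    let γ : Matrix (Fin 2) (Fin 2) ℂ := !![(I * ω)⁻¹, 0; -(I * ω) - I * ω⁻¹, I * ω]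
    γ⁻¹ * β⁻¹ * α⁻¹ * γ * β * α = -1 := by
  intro α β γ
  have hω : ω ≠ 0 := by
    intro h; rw [h] at h8; norm_num at h8
  set u : ℂ := I * ω with hudef
  have hu : u ≠ 0 := mul_ne_zero I_ne_zero hω
  have hu4 : u ^ 4 = -1 := by
    rw [hudef, mul_pow, Complex.I_pow_four, one_mul, h4]
  have hiw : I * ω⁻¹ = -u⁻¹ := by
    rw [hudef]
    field_simp
    linear_combination Complex.I_sq
  have hβ : β = !![u, -u + u⁻¹; 0, u⁻¹] := by
    simp only [β, hiw, hudef]; ring_nf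
  have hγ : γ = !![u⁻¹, 0; -u + u⁻¹, u] := by
    simp only [γ, hiw, hudef]; ring_nf
  have hαi : α⁻¹ = !![u⁻¹, 0; 0, u] := by
    apply inv_eq_right_inv
    show (!![u, 0; 0, u⁻¹] : Matrix (Fin 2) (Fin 2) ℂ) * _ = 1
    ext i j
    fin_cases i <;> fin_cases j <;>
      simp [Matrix.mul_apply, Fin.sum_univ_two, Matrix.one_apply] <;> field_simp
  have hβi : β⁻¹ = !![u⁻¹, u - u⁻¹; 0, u] := by
    rw [hβ]
    apply inv_eq_right_inv
    ext i j
    fin_cases i <;> fin_cases j <;>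
      simp [Matrix.mul_apply, Fin.sum_univ_two, Matrix.one_apply] <;>
      field_simp <;> ring
  have hγi : γ⁻¹ = !![u, 0; u - u⁻¹, u⁻¹] := by
    rw [hγ]
    apply inv_eq_right_inv
    ext i j
    fin_cases i <;> fin_cases j <;>
      simp [Matrix.mul_apply, Fin.sum_univ_two, Matrix.one_apply] <;>
      field_simp <;> ring
  have hα : α = !![u, 0; 0, u⁻¹] := rfl
  rw [hαi, hβi, hγi, hα, hβ, hγ]
  have hu8 : u ^ 8 = 1 := by
    rw [show (8:ℕ) = 4 * 2 from rfl, pow_mul, hu4]; norm_num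
  have hinv : u⁻¹ = -u ^ 3 := by
    field_simp
    linear_combination hu4
  clear hiw hudef hα hβ hγ hαi hβi hγi h4 h8 hω
  clear_value u
  rw [hinv]
  ext i j
  fin_cases i <;> fin_cases j <;>
    simp [Matrix.mul_apply, Fin.sum_univ_two, Matrix.one_apply]
  · linear_combination (-(u^2+1)) * hu4 + (-2 - u^2 - u^4) * hu8
  · left; linear_combination (2*u + 2*u^3) * hu4 + (2*u + 2*u^3 + u^5) * hu8
  · left; linear_combination (-2 - 2*u^2) * hu4 + (-2 - 2*u^2 - u^4) * hu8
  · linear_combination (3 + 3*u^2) * hu4 + (4 + 3*u^2 + 3*u^4 + 3*u^6 + 3*u^8 + u^10) * hu8
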